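/- arXiv:2205.06589 — 8 statements merged into one kernel-verified Lean document; each statement's English description precedes it below -/
import Mathlib

section
/- Let M = M₁ ∘ M₀ be a composite of functors M₀ : A₀ ⥤ A and M₁ : A ⥤ B such that the density comonads D_M of M and D_{M₁} of M₁ both exist. Then the unique natural transformation λ : D_M ⟹ D_{M₁} satisfying λ M ∘ η = η¹ M₀ (where η, η¹ are the respective universal transformations) is a morphism of comonads. -/
open CategoryTheory Limits

universe x₀ x u₀ u w v

/-- for a composite `M = M₀ ⋙ M₁` such that the density comonads `Dm` of
`M` and `D₁` of `M₁` exist (with universal transformations `η`, `η₁` and comonad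
structures determined by them), the unique natural transformation
`lam : Dm ⟹ D₁` satisfying `lam M ∘ η = η₁ M₀` is a morphism of comonads. -/
theorem stmt_4 {A₀ : Type u₀} {A : Type u} {B : Type v}
    [Category.{x₀} A₀] [Category.{x} A] [Category.{w} B]
    (M₀ : A₀ ⥤ A) (M₁ : A ⥤ B) (Dm D₁ : Comonad B)
    (η : M₀ ⋙ M₁ ⟶ (M₀ ⋙ M₁) ⋙ Dm.toFunctor)
    (η₁ : M₁ ⟶ M₁ ⋙ D₁.toFunctor)
    (huniv : ∀ (K : B ⥤ B) (φ : M₀ ⋙ M₁ ⟶ (M₀ ⋙ M₁) ⋙ K),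
      ∃! s : Dm.toFunctor ⟶ K, ∀ a : A₀, φ.app a = η.app a ≫ s.app (M₁.obj (M₀.obj a)))
    (huniv₁ : ∀ (K : B ⥤ B) (φ : M₁ ⟶ M₁ ⋙ K),
      ∃! s : D₁.toFunctor ⟶ K, ∀ b : A, φ.app b = η₁.app b ≫ s.app (M₁.obj b))
    (hDε : ∀ a : A₀, η.app a ≫ Dm.ε.app (M₁.obj (M₀.obj a)) = 𝟙 (M₁.obj (M₀.obj a)))
    (hDδ : ∀ a : A₀, η.app a ≫ Dm.δ.app (M₁.obj (M₀.obj a))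
        = η.app a ≫ Dm.toFunctor.map (η.app a))
    (hEε : ∀ b : A, η₁.app b ≫ D₁.ε.app (M₁.obj b) = 𝟙 (M₁.obj b))
    (hEδ : ∀ b : A, η₁.app b ≫ D₁.δ.app (M₁.obj b)
        = η₁.app b ≫ D₁.toFunctor.map (η₁.app b))
    (lam : Dm.toFunctor ⟶ D₁.toFunctor)
    (hlam : ∀ a : A₀, η.app a ≫ lam.app (M₁.obj (M₀.obj a)) = η₁.app (M₀.obj a)) :
    (∀ X : B, lam.app X ≫ D₁.ε.app X = Dm.ε.app X) ∧
    (∀ X : B, lam.app X ≫ D₁.δ.app X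
        = Dm.δ.app X ≫ Dm.toFunctor.map (lam.app X) ≫ lam.app (D₁.toFunctor.obj X)) := by
  have hln : ∀ b : A, Dm.toFunctor.map (η₁.app b) ≫ lam.app (D₁.toFunctor.obj (M₁.obj b))
      = lam.app (M₁.obj b) ≫ D₁.toFunctor.map (η₁.app b) := fun b => lam.naturality (η₁.app b)
  have hnat : ∀ {a b : A} (f : a ⟶ b), M₁.map f ≫ η₁.app b
      = η₁.app a ≫ D₁.toFunctor.map (M₁.map f) := fun f => η₁.naturality f
  constructor
  · obtain ⟨s, hs, huq⟩ := huniv (𝟭 B)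
      { app := fun a => 𝟙 (M₁.obj (M₀.obj a)), naturality := by intros; simp }
    have h1 : (lam ≫ D₁.ε : Dm.toFunctor ⟶ 𝟭 B) = s := by
      apply huq
      intro a
      simp only [NatTrans.comp_app, Functor.comp_obj]
      slice_rhs 1 2 => rw [hlam a]
      rw [hEε]
    have h2 : (Dm.ε : Dm.toFunctor ⟶ 𝟭 B) = s := by
      apply huq
      intro a
      rw [hDε]
    intro X
    have := congrArg (fun t => NatTrans.app t X) (h1.trans h2.symm)
    simpa using this
  · let s₁ : Dm.toFunctor ⟶ D₁.toFunctor ⋙ D₁.toFunctor :=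
      { app := fun X => lam.app X ≫ D₁.δ.app X
        naturality := by
          intro X Y f
          simp [Category.assoc, lam.naturality_assoc, D₁.δ.naturality] }
    let s₂ : Dm.toFunctor ⟶ D₁.toFunctor ⋙ D₁.toFunctor :=
      { app := fun X => Dm.δ.app X ≫ Dm.toFunctor.map (lam.app X) ≫ lam.app (D₁.toFunctor.obj X)
        naturality := by
          intro X Y f
          simp only [Functor.comp_map, ← Category.assoc]
          rw [Dm.δ.naturality]
          simp only [Functor.comp_map, Category.assoc]
          rw [← Functor.map_comp_assoc, lam.naturality, lam.naturality, Functor.map_comp,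
            ← lam.naturality_assoc] }
    obtain ⟨s, hs, huq⟩ := huniv (D₁.toFunctor ⋙ D₁.toFunctor)
      { app := fun a => η₁.app (M₀.obj a) ≫ D₁.toFunctor.map (η₁.app (M₀.obj a))
        naturality := by
          intro a b f
          simp only [Functor.comp_obj, Functor.comp_map, Category.assoc]
          rw [← Category.assoc, hnat, Category.assoc, ← Functor.map_comp, hnat, Functor.map_comp] }
    have h1 : s₁ = s := by
      apply huq
      intro a
      simp only [s₁, Functor.comp_obj]
      slice_rhs 1 2 => rw [hlam a]
      rw [hEδ]
    have h2 : s₂ = s := by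
      apply huq
      intro a
      simp only [s₂, Functor.comp_obj]
      slice_rhs 1 2 => rw [hDδ a]
      slice_rhs 2 3 => rw [← Functor.map_comp, hlam a]
      slice_rhs 2 3 => rw [hln]
      slice_rhs 1 2 => rw [hlam a]
    intro X
    have := congrArg (fun t => NatTrans.app t X) (h1.trans h2.symm)
    simpa [s₁, s₂] using this
end

section
/- Let M : A ⥤ B be a functor from a discrete category A with density comonad D, let ξ : X ⟶ D(X) be a D-coalgebra, and let ι_C : C ⟶ X be a component inclusion with C connected. If ξ ∘ ι_C factors as ι_f ∘ z through the coproduct inclusion ι_f : M(A) ⟶ D(X) associated with f : M(A) ⟶ X, then ι_C = f ∘ z and ι_f = ξ ∘ f. -/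
open CategoryTheory Limits

universe w v

variable {B : Type v} [Category.{w} B]

/-- An object `C` is connected if every morphism from `C` into a coproduct factors
uniquely through one of the coproduct inclusions. -/
def Connected' (C : B) : Prop :=
  ∀ {I : Type w} (f : I → B) (c : Cofan f), IsColimit c →
    ∀ g : C ⟶ c.pt, ∃! p : Σ i : I, C ⟶ f i, p.2 ≫ c.inj p.1 = g

/-- for the discrete density comonad `D` of `M`, a `D`-coalgebra
`ξ : X ⟶ D(X)`, and a component inclusion `ι_C : C ⟶ X` with `C` connected, if
`ξ ∘ ι_C` factors as `ι_f ∘ z` through the coproduct inclusion `ι_f : M(A) ⟶ D(X)`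
for `f : M(A) ⟶ X`, then `ι_C = f ∘ z` and `ι_f = ξ ∘ f`. -/
theorem stmt_6 {J : Type w}
    (M : Discrete J ⥤ B) (D : B ⥤ B)
    (ι : ∀ (A : Discrete J) {X : B}, (M.obj A ⟶ X) → (M.obj A ⟶ D.obj X))
    (hc : ∀ X : B, IsColimit (Cofan.mk (D.obj X)
      (fun p : Σ A : Discrete J, (M.obj A ⟶ X) => ι p.1 p.2)))
    (hmap : ∀ {X Y : B} (h : X ⟶ Y),
      D.map h = (hc X).desc (Cofan.mk (D.obj Y)
        (fun p : Σ A : Discrete J, (M.obj A ⟶ X) => ι p.1 (p.2 ≫ h))))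
    (ε : D ⟶ 𝟭 B) (δ : D ⟶ D ⋙ D)
    (hε : ∀ A : Discrete J, ι A (𝟙 (M.obj A)) ≫ ε.app (M.obj A) = 𝟙 (M.obj A))
    (hδ : ∀ A : Discrete J, ι A (𝟙 (M.obj A)) ≫ δ.app (M.obj A)
        = ι A (𝟙 (M.obj A)) ≫ D.map (ι A (𝟙 (M.obj A))))
    (X C Y : B) (hC : Connected' C) (ιC : C ⟶ X) (ιY : Y ⟶ X)
    (hcomp : Nonempty (IsColimit (BinaryCofan.mk ιC ιY)))
    (ξ : X ⟶ D.obj X)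
    (hξ1 : ξ ≫ ε.app X = 𝟙 X)
    (hξ2 : ξ ≫ δ.app X = ξ ≫ D.map ξ)
    (A : Discrete J) (f : M.obj A ⟶ X) (z : C ⟶ M.obj A)
    (hfact : ιC ≫ ξ = z ≫ ι A f) :
    ιC = z ≫ f ∧ f ≫ ξ = ι A f := by

  -- general fact: ι A g ≫ D.map h = ι A (g ≫ h)
  have L1 : ∀ {X' Y' : B} (g : M.obj A ⟶ X') (h : X' ⟶ Y'),
      ι A g ≫ D.map h = ι A (g ≫ h) := by
    intro X' Y' g h
    rw [hmap h]
    exact (hc X').fac (Cofan.mk (D.obj Y')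
      (fun p : Σ A : Discrete J, (M.obj A ⟶ X') => ι p.1 (p.2 ≫ h))) ⟨⟨A, g⟩⟩
  -- ι A g = ι A 𝟙 ≫ D.map g
  have L2 : ∀ {X' : B} (g : M.obj A ⟶ X'), ι A g = ι A (𝟙 (M.obj A)) ≫ D.map g := by
    intro X' g; rw [L1, Category.id_comp]
  -- counit: ι A g ≫ ε.app X' = g
  have L3 : ∀ {X' : B} (g : M.obj A ⟶ X'), ι A g ≫ ε.app X' = g := by
    intro X' g
    rw [L2 g, Category.assoc, ε.naturality, ← Category.assoc, hε]
    simp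
  -- comultiplication: ι A g ≫ δ.app X' = ι A (ι A g)
  have L4 : ∀ {X' : B} (g : M.obj A ⟶ X'), ι A g ≫ δ.app X' = ι A (ι A g) := by
    intro X' g
    rw [L2 g, Category.assoc, δ.naturality, ← Category.assoc, hδ]
    have : (D ⋙ D).map g = D.map (D.map g) := rfl
    rw [this, Category.assoc, ← D.map_comp, L1, Category.id_comp, L1]
  constructor
  · have := congrArg (fun m => m ≫ ε.app X) hfact
    simp only [Category.assoc, hξ1, Category.comp_id, L3] at this
    exact this
  · -- use connectedness at D (D X)
    have e1 : z ≫ ι A (ι A f) = ιC ≫ ξ ≫ δ.app X := by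
      rw [← L4 f, ← Category.assoc, ← hfact, Category.assoc]
    have e2 : z ≫ ι A (f ≫ ξ) = ιC ≫ ξ ≫ δ.app X := by
      rw [hξ2, ← L1 f ξ, ← Category.assoc, ← hfact, Category.assoc]
    obtain ⟨p, hp, hun⟩ := hC (fun p : Σ A' : Discrete J, (M.obj A' ⟶ D.obj X) => M.obj p.1)
      (Cofan.mk (D.obj (D.obj X))
        (fun p : Σ A' : Discrete J, (M.obj A' ⟶ D.obj X) => ι p.1 p.2))
      (hc (D.obj X)) (ιC ≫ ξ ≫ δ.app X)
    have h1 : (⟨⟨A, ι A f⟩, z⟩ : Σ p : Σ A' : Discrete J, (M.obj A' ⟶ D.obj X), C ⟶ M.obj p.1) = p :=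
      hun _ (by simpa [Cofan.inj] using e1)
    have h2 : (⟨⟨A, f ≫ ξ⟩, z⟩ : Σ p : Σ A' : Discrete J, (M.obj A' ⟶ D.obj X), C ⟶ M.obj p.1) = p :=
      hun _ (by simpa [Cofan.inj] using e2)
    have h3 := h1.trans h2.symm
    have h4 : (⟨A, ι A f⟩ : Σ A' : Discrete J, (M.obj A' ⟶ D.obj X)) = ⟨A, f ≫ ξ⟩ :=
      congrArg Sigma.fst h3
    have h5 : HEq (ι A f) (f ≫ ξ) := (Sigma.mk.inj_iff.mp h4).2
    exact (eq_of_heq h5).symm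
end

section
/- Let B be a category in which every object is a coproduct of connected objects and all coproduct inclusions are monomorphisms. If a component inclusion ι : C ⟶ Y (C connected) factors through a monomorphism m : X ⟶ Y, then C is (isomorphic to) a component of X. -/
open CategoryTheory Limits

universe w v

variable {B : Type v} [Category.{w} B]

/-- A category is componental if every object is (isomorphic to) a coproduct of
connected objects and all coproduct inclusions are monomorphisms. -/
def Componental (B : Type v) [Category.{w} B] : Prop :=
  (∀ X : B, ∃ (I : Type w) (f : I → B) (c : Cofan f),
      (∀ i, Connected' (f i)) ∧ Nonempty (IsColimit c) ∧ Nonempty (c.pt ≅ X)) ∧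
  (∀ (I : Type w) (f : I → B) (c : Cofan f), Nonempty (IsColimit c) → ∀ i, Mono (c.inj i))

/-- `C` is a component of `X` if `C` is connected and `X ≅ C + Y` for some `Y`. -/
def IsComponentOf (C X : B) : Prop :=
  Connected' C ∧ ∃ (Y : B) (i₁ : C ⟶ X) (i₂ : Y ⟶ X),
    Nonempty (IsColimit (BinaryCofan.mk i₁ i₂))

/-- Convert a binary cofan colimit into a `Cofan` colimit over `ULift Bool`. -/
noncomputable def boolCofanIsColimit {C Z P : B} (i₁ : C ⟶ P) (i₂ : Z ⟶ P)
    (hc : IsColimit (BinaryCofan.mk i₁ i₂)) :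
    IsColimit (Cofan.mk (f := fun b : ULift.{w} Bool => bif b.down then C else Z) P
      (fun b => match b with | ⟨true⟩ => i₁ | ⟨false⟩ => i₂)) :=
  mkCofanColimit _
    (fun t => hc.desc (BinaryCofan.mk (t.inj ⟨true⟩) (t.inj ⟨false⟩)))
    (fun t j => by
      obtain ⟨_ | _⟩ := j
      · exact hc.fac (BinaryCofan.mk (t.inj ⟨true⟩) (t.inj ⟨false⟩)) ⟨WalkingPair.right⟩
      · exact hc.fac (BinaryCofan.mk (t.inj ⟨true⟩) (t.inj ⟨false⟩)) ⟨WalkingPair.left⟩)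
    (fun t m hm => hc.uniq (BinaryCofan.mk (t.inj ⟨true⟩) (t.inj ⟨false⟩)) m (by
      rintro ⟨_ | _⟩
      · exact hm ⟨true⟩
      · exact hm ⟨false⟩))

/-- Splitting a cofan at an index gives a binary cofan colimit. -/
noncomputable def splitCofanIsColimit [HasCoproducts.{w} B] {I : Type w} (f : I → B)
    (c : Cofan f) (hc : IsColimit c) (i : I) :
    IsColimit (BinaryCofan.mk (c.inj i)
      (Sigma.desc (fun j : {j : I // j ≠ i} => c.inj j.1))) := by
  classical
  let T : ∀ _s : BinaryCofan (f i) (∐ fun j : {j : I // j ≠ i} => f j.1), Cofan f := fun s =>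
    Cofan.mk s.pt (fun j =>
      if hj : j = i then eqToHom (congrArg f hj) ≫ s.inl
      else Sigma.ι (fun j : {j : I // j ≠ i} => f j.1) ⟨j, hj⟩ ≫ s.inr)
  refine BinaryCofan.isColimitMk (fun s => hc.desc (T s))
    (fun s => ?_) (fun s => ?_) (fun s m h1 h2 => ?_)
  · have hfac := hc.fac (T s) ⟨i⟩
    simp only [T, Cofan.mk_pt, Cofan.mk_ι_app, dif_pos rfl, eqToHom_refl,
      Category.id_comp] at hfac
    exact hfac.trans (Category.id_comp _)
  · apply Sigma.hom_ext
    rintro ⟨j, hj⟩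
    have hfac := hc.fac (T s) ⟨j⟩
    simp only [T, Cofan.mk_pt, Cofan.mk_ι_app, dif_neg hj] at hfac
    rw [← Category.assoc, Sigma.ι_desc]
    exact hfac
  · refine hc.hom_ext ?_
    rintro ⟨j⟩
    by_cases hj : j = i
    · subst hj
      have hfac := hc.fac (T s) ⟨j⟩
      simp only [T, Cofan.mk_pt, Cofan.mk_ι_app, dif_pos rfl, eqToHom_refl,
        Category.id_comp] at hfac
      rw [hfac]
      exact h1.trans (Category.id_comp _).symm
    · have hfac := hc.fac (T s) ⟨j⟩
      simp only [T, Cofan.mk_pt, Cofan.mk_ι_app, dif_neg hj] at hfac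
      rw [hfac]
      have key : c.ι.app ⟨j⟩ ≫ m = Sigma.ι (fun j : {j : I // j ≠ i} => f j.1) ⟨j, hj⟩ ≫
          ((Sigma.desc fun j : {j : I // j ≠ i} => c.inj j.1) ≫ m) := by
        rw [← Category.assoc, Sigma.ι_desc]
        rfl
      rw [key, h2]


/-- in a componental category, a component inclusion `ι : C ⟶ Y`
(`C` connected) which factors through a monomorphism `m : X ⟶ Y` exhibits `C` as
(isomorphic to) a component of `X`. -/
theorem stmt_7 [HasCoproducts.{w} B] (hB : Componental B)
    (C X Y Z : B) (hC : Connected' C) (ι : C ⟶ Y) (ιZ : Z ⟶ Y)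
    (hcomp : Nonempty (IsColimit (BinaryCofan.mk ι ιZ)))
    (m : X ⟶ Y) (hm : Mono m) (h : C ⟶ X) (hf : h ≫ m = ι) :
    ∃ C' : B, Nonempty (C ≅ C') ∧ IsComponentOf C' X := by
  classical
  obtain ⟨hdec, hmono⟩ := hB
  obtain ⟨I, f, c, hconn, ⟨hc⟩, ⟨e⟩⟩ := hdec X
  obtain ⟨bc⟩ := hcomp
  -- Y as a cofan over `ULift Bool`
  set fam : ULift.{w} Bool → B := fun b => bif b.down then C else Z with hfam
  set t : Cofan fam := Cofan.mk Y
    (fun b => match b with | ⟨true⟩ => ι | ⟨false⟩ => ιZ) with ht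
  have htcol : IsColimit t := boolCofanIsColimit ι ιZ bc
  have htt : t.inj ⟨true⟩ = ι := rfl
  have htf : t.inj ⟨false⟩ = ιZ := rfl
  have hιmono : Mono ι := by
    have := hmono _ fam t ⟨htcol⟩ ⟨true⟩
    rwa [htt] at this
  have hinjmono : ∀ j, Mono (c.inj j) := hmono I f c ⟨hc⟩
  -- factor h through a component of X
  obtain ⟨⟨i, p⟩, hp, -⟩ := hC f c hc (h ≫ e.inv)
  -- hp : p ≫ c.inj i = h ≫ e.inv
  have hpm : p ≫ c.inj i ≫ e.hom ≫ m = ι := by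
    rw [← Category.assoc, ← Category.assoc, hp]
    simp [hf]
  -- factor the inclusion of this component of X into Y through the cofan for Y
  obtain ⟨⟨b, r⟩, hr, -⟩ := hconn i fam t htcol (c.inj i ≫ e.hom ≫ m)
  obtain ⟨b⟩ := b
  cases b with
  | false =>
    -- impossible: C would map into Z
    exfalso
    have hrf : r ≫ ιZ = c.inj i ≫ e.hom ≫ m := hr
    obtain ⟨u, -, hu⟩ := hC fam t htcol ι
    have h1 : (⟨⟨true⟩, 𝟙 C⟩ : Σ b : ULift.{w} Bool, C ⟶ fam b) = u := by
      apply hu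
      simp only [htt]; exact Category.id_comp ι
    have h2 : (⟨⟨false⟩, p ≫ r⟩ : Σ b : ULift.{w} Bool, C ⟶ fam b) = u := by
      apply hu
      show (p ≫ r) ≫ t.inj ⟨false⟩ = ι
      rw [Category.assoc, htf, hrf, hpm]
    rw [← h2] at h1
    exact Bool.noConfusion (congrArg (fun q => q.1.down) h1)
  | true =>
    -- r : f i ⟶ C, and p is an isomorphism
    have hrt : r ≫ ι = c.inj i ≫ e.hom ≫ m := hr
    have hmono' : Mono (c.inj i ≫ e.hom ≫ m) := by
      have := hinjmono i
      infer_instance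
    have hpr : p ≫ r = 𝟙 C := by
      rw [← cancel_mono ι]
      rw [Category.assoc, hrt, hpm, Category.id_comp]
    have hrp : r ≫ p = 𝟙 (f i) := by
      rw [← cancel_mono (c.inj i ≫ e.hom ≫ m)]
      rw [Category.assoc, hpm, hrt, Category.id_comp]
    refine ⟨f i, ⟨⟨p, r, hpr, hrp⟩⟩, hconn i, ∐ (fun j : {j : I // j ≠ i} => f j.1),
      c.inj i ≫ e.hom, Sigma.desc (fun j : {j : I // j ≠ i} => c.inj j.1) ≫ e.hom, ⟨?_⟩⟩
    exact IsColimit.ofIsoColimit (splitCofanIsColimit f c hc i)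
      (Cocones.ext e (by rintro ⟨_ | _⟩ <;> simp <;> rfl))
end

section
/- Let M : A ⥤ B be a functor from a discrete category into a componental category B, admitting a pointwise density comonad D. Then a connected object C of B admits a D-coalgebra structure if and only if C is isomorphic to M(A) for some A in A. -/
open CategoryTheory Limits

universe w v

variable {B : Type v} [Category.{w} B]

/-- for `M : A ⥤ B` from a discrete category into a componental category,
with pointwise density comonad `D` (given at `X` by `∐_{A, f : M(A) ⟶ X} M(A)`), a
connected object `C` admits a `D`-coalgebra structure iff `C ≅ M(A)` for some `A`. -/
theorem stmt_8 {J : Type w}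
    (M : Discrete J ⥤ B) (D : B ⥤ B)
    (ι : ∀ (A : Discrete J) {X : B}, (M.obj A ⟶ X) → (M.obj A ⟶ D.obj X))
    (hc : ∀ X : B, IsColimit (Cofan.mk (D.obj X)
      (fun p : Σ A : Discrete J, (M.obj A ⟶ X) => ι p.1 p.2)))
    (hmap : ∀ {X Y : B} (h : X ⟶ Y),
      D.map h = (hc X).desc (Cofan.mk (D.obj Y)
        (fun p : Σ A : Discrete J, (M.obj A ⟶ X) => ι p.1 (p.2 ≫ h))))
    (ε : D ⟶ 𝟭 B) (δ : D ⟶ D ⋙ D)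
    (hε : ∀ A : Discrete J, ι A (𝟙 (M.obj A)) ≫ ε.app (M.obj A) = 𝟙 (M.obj A))
    (hδ : ∀ A : Discrete J, ι A (𝟙 (M.obj A)) ≫ δ.app (M.obj A)
        = ι A (𝟙 (M.obj A)) ≫ D.map (ι A (𝟙 (M.obj A))))
    (hB : Componental B)
    (C : B) (hC : Connected' C) :
    (∃ ξ : C ⟶ D.obj C, ξ ≫ ε.app C = 𝟙 C ∧ ξ ≫ δ.app C = ξ ≫ D.map ξ) ↔
      ∃ A : Discrete J, Nonempty (C ≅ M.obj A) := by

  -- Basic computation lemmas about `ι` and `D.map`.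
  have key1 : ∀ (A : Discrete J) {X Y : B} (f : M.obj A ⟶ X) (h : X ⟶ Y),
      ι A f ≫ D.map h = ι A (f ≫ h) := by
    intro A X Y f h
    rw [hmap h]
    exact (hc X).fac _ ⟨⟨A, f⟩⟩
  have key0 : ∀ (A : Discrete J) {X : B} (f : M.obj A ⟶ X),
      ι A (𝟙 (M.obj A)) ≫ D.map f = ι A f := by
    intro A X f; rw [key1]; simp
  have key2 : ∀ (A : Discrete J) {X : B} (f : M.obj A ⟶ X),
      ι A f ≫ ε.app X = f := by
    intro A X f
    rw [← key0, Category.assoc, ε.naturality f, ← Category.assoc, hε]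
    simp
  have key3 : ∀ (A : Discrete J) {X : B} (f : M.obj A ⟶ X),
      ι A f ≫ δ.app X = ι A (ι A f) := by
    intro A X f
    rw [← key0, Category.assoc, δ.naturality f, ← Category.assoc, hδ A,
      Category.assoc, show (D ⋙ D).map f = D.map (D.map f) from rfl,
      ← D.map_comp, key0, key0]
  have cinj : ∀ {X : B} (p : Σ A : Discrete J, (M.obj A ⟶ X)),
      (Cofan.mk (D.obj X) (fun p : Σ A : Discrete J, (M.obj A ⟶ X) => ι p.1 p.2)).inj p
        = ι p.1 p.2 := fun _ => rfl
  constructor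
  · rintro ⟨ξ, hξε, hξδ⟩
    obtain ⟨⟨⟨A, f⟩, g⟩, hfac, -⟩ :=
      hC (fun p : Σ A : Discrete J, (M.obj A ⟶ C) => M.obj p.1)
        (Cofan.mk (D.obj C) (fun p => ι p.1 p.2)) (hc C) ξ
    simp only [cinj] at hfac
    -- `hfac : g ≫ ι A f = ξ`
    have hgf : g ≫ f = 𝟙 C := by
      have := hξε
      rw [← hfac, Category.assoc, key2] at this
      exact this
    -- uniqueness of factorization of `ξ ≫ δ.app C` through the coproduct at `D.obj C`
    obtain ⟨p0, -, huniq⟩ :=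
      hC (fun p : Σ A : Discrete J, (M.obj A ⟶ D.obj C) => M.obj p.1)
        (Cofan.mk (D.obj (D.obj C)) (fun p => ι p.1 p.2)) (hc (D.obj C)) (ξ ≫ δ.app C)
    have h1 : (⟨⟨A, ι A f⟩, g⟩ : Σ p : Σ A : Discrete J, (M.obj A ⟶ D.obj C), C ⟶ M.obj p.1)
        = p0 := by
      apply huniq
      simp only [cinj]
      rw [← hfac, Category.assoc, key3]
    have h2 : (⟨⟨A, f ≫ ξ⟩, g⟩ : Σ p : Σ A : Discrete J, (M.obj A ⟶ D.obj C), C ⟶ M.obj p.1)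
        = p0 := by
      apply huniq
      simp only [cinj]
      rw [hξδ, ← hfac, Category.assoc, key1]
    have h3 : (⟨A, ι A f⟩ : Σ A : Discrete J, (M.obj A ⟶ D.obj C)) = ⟨A, f ≫ ξ⟩ :=
      congrArg Sigma.fst (h1.trans h2.symm)
    have h4 : ι A f = f ≫ ξ := by
      obtain ⟨-, h⟩ := Sigma.mk.inj_iff.mp h3
      exact eq_of_heq h
    have hmono : Mono ((Cofan.mk (D.obj C)
        (fun p : Σ A : Discrete J, (M.obj A ⟶ C) => ι p.1 p.2)).inj ⟨A, f⟩) :=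
      hB.2 _ _ _ ⟨hc C⟩ ⟨A, f⟩
    rw [cinj] at hmono
    have hfg : f ≫ g = 𝟙 (M.obj A) := by
      have : (f ≫ g) ≫ ι A f = 𝟙 (M.obj A) ≫ ι A f := by
        rw [Category.assoc, hfac, ← h4, Category.id_comp]
      exact hmono.right_cancellation _ _ this
    exact ⟨A, ⟨⟨g, f, hgf, hfg⟩⟩⟩
  · rintro ⟨A, ⟨e⟩⟩
    refine ⟨e.hom ≫ ι A e.inv, ?_, ?_⟩
    · rw [Category.assoc, key2, e.hom_inv_id]
    · rw [Category.assoc, key3, Category.assoc, key1, ← Category.assoc e.inv,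
        e.inv_hom_id, Category.id_comp]
end

section
/- Let M : A ⥤ B be a functor from a discrete component-based category A into a componental category B such that the pointwise density comonad D of M exists. Then an object X of B admits a D-coalgebra if and only if X is isomorphic to a coproduct of objects each isomorphic to some M(A), A ∈ A. -/
open CategoryTheory Limits

universe w v

variable {B : Type v} [Category.{w} B]

lemma sigma_snd_eq' {α : Type*} {β : α → Type*} {a : α} {x y : β a}
    (h : (⟨a, x⟩ : Σ a, β a) = ⟨a, y⟩) : x = y := by
  cases h
  rfl

/-- A connected summand of a coproduct is a component of anything isomorphic
to that coproduct. -/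
lemma isComponentOf_of_cofan [HasCoproducts.{w} B] {I : Type w} (f : I → B)
    (d : Cofan f) (hd : IsColimit d) {Z : B} (ψ : d.pt ≅ Z) (k : I)
    (hk : Connected' (f k)) : IsComponentOf (f k) Z := by
  classical
  set rest : {i // i ≠ k} → B := fun p => f p.1 with hrest
  refine ⟨hk, ∐ rest, d.inj k ≫ ψ.hom, (Sigma.desc fun p => d.inj p.1) ≫ ψ.hom, ⟨?_⟩⟩
  set leg : ∀ (s : BinaryCofan (f k) (∐ rest)) (i : I), f i ⟶ s.pt := fun s i =>
    (if h : i = k then eqToHom (congrArg f h) ≫ s.inl else Sigma.ι rest ⟨i, h⟩ ≫ s.inr)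
    with hleg
  refine BinaryCofan.isColimitMk (fun s => ψ.inv ≫ hd.desc (Cofan.mk s.pt (leg s))) ?_ ?_ ?_
  · intro s
    rw [Category.assoc, Iso.hom_inv_id_assoc]
    have h1 := hd.fac (Cofan.mk s.pt (leg s)) ⟨k⟩
    have h2 : leg s k = s.inl := by simp [hleg]; exact Category.id_comp _
    rw [show d.inj k = d.ι.app ⟨k⟩ from rfl, h1]
    simpa using h2
  · intro s
    rw [Category.assoc, Iso.hom_inv_id_assoc]
    ext ⟨i, hi⟩
    have h1 : Sigma.ι rest ⟨i, hi⟩ ≫ Sigma.desc (fun p => d.inj p.1) = d.inj i :=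
      Sigma.ι_desc _ _
    rw [← Category.assoc, h1]
    have h2 := hd.fac (Cofan.mk s.pt (leg s)) ⟨i⟩
    rw [show d.inj i = d.ι.app ⟨i⟩ from rfl, h2]
    simp [hleg, dif_neg hi]
  · intro s m hm1 hm2
    rw [Iso.eq_inv_comp]
    refine hd.hom_ext fun ⟨i⟩ => ?_
    rw [hd.fac]
    by_cases h : i = k
    · subst h
      have : leg s i = s.inl := by simp [hleg]; exact Category.id_comp _
      rw [show (Cofan.mk s.pt (leg s)).ι.app ⟨i⟩ = leg s i from rfl, this, ← hm1]
      rw [← Category.assoc]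
      rfl
    · have : leg s i = Sigma.ι rest ⟨i, h⟩ ≫ s.inr := by simp [hleg, dif_neg h]
      rw [show (Cofan.mk s.pt (leg s)).ι.app ⟨i⟩ = leg s i from rfl, this, ← hm2]
      have h3 : Sigma.ι rest ⟨i, h⟩ ≫ ((Sigma.desc fun p => d.inj p.1) ≫ ψ.hom) =
          d.ι.app ⟨i⟩ ≫ ψ.hom := by
        rw [← Category.assoc, Sigma.ι_desc]
        rfl
      rw [← Category.assoc, ← Category.assoc, h3, Category.assoc]

/-- for `M : A ⥤ B` from a discrete component-based category into a
componental category with pointwise density comonad `D`, an object `X` admits a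
`D`-coalgebra iff `X` is isomorphic to a coproduct of objects each isomorphic to some
`M(A)`. -/
theorem stmt_10 {J : Type w} [HasCoproducts.{w} B]
    (M : Discrete J ⥤ B) (D : B ⥤ B)
    (ι : ∀ (A : Discrete J) {X : B}, (M.obj A ⟶ X) → (M.obj A ⟶ D.obj X))
    (hc : ∀ X : B, IsColimit (Cofan.mk (D.obj X)
      (fun p : Σ A : Discrete J, (M.obj A ⟶ X) => ι p.1 p.2)))
    (hmap : ∀ {X Y : B} (h : X ⟶ Y),
      D.map h = (hc X).desc (Cofan.mk (D.obj Y)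
        (fun p : Σ A : Discrete J, (M.obj A ⟶ X) => ι p.1 (p.2 ≫ h))))
    (ε : D ⟶ 𝟭 B) (δ : D ⟶ D ⋙ D)
    (hε : ∀ A : Discrete J, ι A (𝟙 (M.obj A)) ≫ ε.app (M.obj A) = 𝟙 (M.obj A))
    (hδ : ∀ A : Discrete J, ι A (𝟙 (M.obj A)) ≫ δ.app (M.obj A)
        = ι A (𝟙 (M.obj A)) ≫ D.map (ι A (𝟙 (M.obj A))))
    (hB : Componental B)
    (hbased : ∀ (A : Discrete J) (C' : B), IsComponentOf C' (M.obj A) →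
      ∃ A' : Discrete J, Nonempty (C' ≅ M.obj A'))
    (X : B) :
    (∃ ξ : X ⟶ D.obj X, ξ ≫ ε.app X = 𝟙 X ∧ ξ ≫ δ.app X = ξ ≫ D.map ξ) ↔
      ∃ (I : Type w) (f : I → B) (c : Cofan f),
        (∀ i, ∃ A : Discrete J, Nonempty (f i ≅ M.obj A)) ∧
        Nonempty (IsColimit c) ∧ Nonempty (c.pt ≅ X) := by
  -- basic computation rules
  have L1 : ∀ (A : Discrete J) {Y Z : B} (g : M.obj A ⟶ Y) (h : Y ⟶ Z),
      ι A g ≫ D.map h = ι A (g ≫ h) := by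
    intro A Y Z g h
    rw [hmap h]
    exact (hc Y).fac (Cofan.mk (D.obj Z)
      (fun p : Σ A : Discrete J, (M.obj A ⟶ Y) => ι p.1 (p.2 ≫ h))) ⟨⟨A, g⟩⟩
  have L1' : ∀ (A : Discrete J) {Y : B} (f : M.obj A ⟶ Y),
      ι A (𝟙 (M.obj A)) ≫ D.map f = ι A f := by
    intro A Y f; rw [L1, Category.id_comp]
  have L2 : ∀ (A : Discrete J) {Y : B} (f : M.obj A ⟶ Y),
      ι A f ≫ ε.app Y = f := by
    intro A Y f
    rw [← L1', Category.assoc, ε.naturality, ← Category.assoc, hε]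
    simp
  have L3 : ∀ (A : Discrete J) {Y : B} (f : M.obj A ⟶ Y),
      ι A f ≫ δ.app Y = ι A (ι A f) := by
    intro A Y f
    rw [← L1' A f, Category.assoc, δ.naturality, ← Category.assoc, hδ, Category.assoc]
    have h4 : D.map (ι A (𝟙 (M.obj A))) ≫ (D ⋙ D).map f = D.map (ι A f) := by
      rw [Functor.comp_map, ← D.map_comp, L1']
    rw [h4, L1', L1']
  constructor
  · rintro ⟨ξ, hξε, hξδ⟩
    obtain ⟨I, fC, c, hconn, ⟨hcol⟩, ⟨φ⟩⟩ := hB.1 X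
    refine ⟨I, fC, c, ?_, ⟨hcol⟩, ⟨φ⟩⟩
    intro i
    -- factor the coalgebra restricted to the component through the coproduct D X
    obtain ⟨⟨⟨A, f⟩, h⟩, hfac, -⟩ :=
      hconn i (fun p : Σ A : Discrete J, (M.obj A ⟶ X) => M.obj p.1)
        (Cofan.mk (D.obj X) (fun p : Σ A : Discrete J, (M.obj A ⟶ X) => ι p.1 p.2))
        (hc X) (c.inj i ≫ φ.hom ≫ ξ)
    have hfac' : h ≫ ι A f = c.inj i ≫ φ.hom ≫ ξ := hfac
    have hfε : h ≫ f = c.inj i ≫ φ.hom := by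
      have h0 := congrArg (fun q => q ≫ ε.app X) hfac'
      simpa [Category.assoc, L2, hξε] using h0
    -- the morphism f is a coalgebra point
    have hfξ : f ≫ ξ = ι A f := by
      obtain ⟨q, hq, huq⟩ :=
        hconn i (fun p : Σ A : Discrete J, (M.obj A ⟶ D.obj X) => M.obj p.1)
          (Cofan.mk (D.obj (D.obj X))
            (fun p : Σ A : Discrete J, (M.obj A ⟶ D.obj X) => ι p.1 p.2))
          (hc (D.obj X)) (c.inj i ≫ φ.hom ≫ ξ ≫ δ.app X)
      have f1 : h ≫ ι A (ι A f) = c.inj i ≫ φ.hom ≫ ξ ≫ δ.app X := by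
        rw [← L3, ← Category.assoc, hfac']
        simp [Category.assoc]
      have f2 : h ≫ ι A (f ≫ ξ) = c.inj i ≫ φ.hom ≫ ξ ≫ δ.app X := by
        rw [← L1, ← Category.assoc, hfac']
        simp only [Category.assoc]
        rw [← hξδ]
      have h1 := huq ⟨⟨A, ι A f⟩, h⟩ f1
      have h2 := huq ⟨⟨A, f ≫ ξ⟩, h⟩ f2
      have e1 : (⟨⟨A, ι A f⟩, h⟩ :
          Σ p : Σ A : Discrete J, (M.obj A ⟶ D.obj X), fC i ⟶ M.obj p.1) =
          ⟨⟨A, f ≫ ξ⟩, h⟩ := by rw [h1, h2]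
      have e1' : (⟨A, ι A f⟩ : Σ A : Discrete J, (M.obj A ⟶ D.obj X)) = ⟨A, f ≫ ξ⟩ :=
        congrArg Sigma.fst e1
      exact (sigma_snd_eq' e1').symm
    -- f is monic
    have hmι : Mono (ι A f) := hB.2 _ _
      (Cofan.mk (D.obj X) (fun p : Σ A : Discrete J, (M.obj A ⟶ X) => ι p.1 p.2))
      ⟨hc X⟩ ⟨A, f⟩
    haveI hmfξ : Mono (f ≫ ξ) := by rw [hfξ]; exact hmι
    have hmf : Mono f := mono_of_mono f ξ
    -- decompose M A into components
    obtain ⟨K, fD, d, hconnD, ⟨hcolD⟩, ⟨ψ⟩⟩ := hB.1 (M.obj A)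
    obtain ⟨⟨k, h'⟩, hfacD, -⟩ := hconn i fD d hcolD (h ≫ ψ.inv)
    have hfacD' : h' ≫ d.inj k = h ≫ ψ.inv := hfacD
    obtain ⟨A', ⟨χ⟩⟩ := hbased A (fD k) (isComponentOf_of_cofan fD d hcolD ψ k (hconnD k))
    -- factor the component of M A back through the components of X
    obtain ⟨⟨j, e'⟩, hfacE, -⟩ := hconnD k fC c hcol (d.inj k ≫ ψ.hom ≫ f ≫ φ.inv)
    have hfacE' : e' ≫ c.inj j = d.inj k ≫ ψ.hom ≫ f ≫ φ.inv := hfacE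
    -- h' ≫ e' = 𝟙
    have key1 : (h' ≫ e') ≫ c.inj j = c.inj i := by
      rw [Category.assoc, hfacE', ← Category.assoc, hfacD']
      simp only [Category.assoc, Iso.inv_hom_id_assoc]
      rw [← Category.assoc, hfε]
      simp
    obtain ⟨q2, hq2, huq2⟩ := hconn i fC c hcol (c.inj i)
    have u1 := huq2 ⟨j, h' ≫ e'⟩ key1
    have u2 := huq2 ⟨i, 𝟙 (fC i)⟩ (Category.id_comp _)
    have e2 : (⟨j, h' ≫ e'⟩ : Σ i', fC i ⟶ fC i') = ⟨i, 𝟙 (fC i)⟩ := by rw [u1, u2]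
    have hji : j = i := congrArg Sigma.fst e2
    subst hji
    have h'e' : h' ≫ e' = 𝟙 (fC j) := sigma_snd_eq' (β := fun i' => fC j ⟶ fC i') e2
    -- e' ≫ h' = 𝟙
    have key2 : e' ≫ h = d.inj k ≫ ψ.hom := by
      have h5 : (e' ≫ h) ≫ f = (d.inj k ≫ ψ.hom) ≫ f := by
        rw [Category.assoc, hfε, ← Category.assoc, hfacE']
        simp [Category.assoc]
      exact (cancel_mono f).mp h5
    have key3 : (e' ≫ h') ≫ d.inj k = d.inj k := by
      rw [Category.assoc, hfacD', ← Category.assoc, key2]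
      simp
    obtain ⟨q3, hq3, huq3⟩ := hconnD k fD d hcolD (d.inj k)
    have v1 := huq3 ⟨k, e' ≫ h'⟩ key3
    have v2 := huq3 ⟨k, 𝟙 (fD k)⟩ (Category.id_comp _)
    have e3 : (⟨k, e' ≫ h'⟩ : Σ k', fD k ⟶ fD k') = ⟨k, 𝟙 (fD k)⟩ := by rw [v1, v2]
    have e'h' : e' ≫ h' = 𝟙 (fD k) := sigma_snd_eq' (β := fun k' => fD k ⟶ fD k') e3
    exact ⟨A', ⟨(Iso.mk h' e' h'e' e'h') ≪≫ χ⟩⟩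
  · rintro ⟨I, fI, c, hiso, ⟨hcol⟩, ⟨φ⟩⟩
    choose A ψn using hiso
    have ψ := fun i => (ψn i).some
    obtain ⟨m, hm⟩ : ∃ m : ∀ i, M.obj (A i) ⟶ X,
        ∀ i, m i = (ψ i).inv ≫ c.inj i ≫ φ.hom := ⟨_, fun i => rfl⟩
    obtain ⟨ξ, hξ⟩ : ∃ ξ : X ⟶ D.obj X,
        ξ = φ.inv ≫ hcol.desc (Cofan.mk (D.obj X) fun i => (ψ i).hom ≫ ι (A i) (m i)) :=
      ⟨_, rfl⟩
    have hfacc : ∀ i, c.inj i ≫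
        hcol.desc (Cofan.mk (D.obj X) fun i => (ψ i).hom ≫ ι (A i) (m i)) =
        (ψ i).hom ≫ ι (A i) (m i) := fun i =>
      hcol.fac (Cofan.mk (D.obj X) fun i => (ψ i).hom ≫ ι (A i) (m i)) ⟨i⟩
    have hci : ∀ i, c.inj i ≫ φ.hom ≫ ξ = (ψ i).hom ≫ ι (A i) (m i) := by
      intro i
      rw [hξ, Iso.hom_inv_id_assoc]
      exact hfacc i
    have hmξ : ∀ i, m i ≫ ξ = ι (A i) (m i) := by
      intro i
      have hstep : m i ≫ ξ = (ψ i).inv ≫ (c.inj i ≫ φ.hom ≫ ξ) := by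
        rw [hm i]; simp only [Category.assoc]
      rw [hstep, hci i, Iso.inv_hom_id_assoc]
    refine ⟨ξ, ?_, ?_⟩
    · rw [hξ, Category.assoc, Iso.inv_comp_eq, Category.comp_id]
      refine hcol.hom_ext fun ⟨i⟩ => ?_
      rw [show c.ι.app ⟨i⟩ = c.inj i from rfl, ← Category.assoc, hfacc i,
        Category.assoc, L2, hm i]
      simp
    · refine (cancel_epi φ.hom).mp ?_
      refine hcol.hom_ext fun ⟨i⟩ => ?_
      show c.inj i ≫ φ.hom ≫ ξ ≫ δ.app X = c.inj i ≫ φ.hom ≫ ξ ≫ D.map ξ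
      have e1 : c.inj i ≫ φ.hom ≫ ξ ≫ δ.app X
          = (ψ i).hom ≫ ι (A i) (ι (A i) (m i)) := by
        calc c.inj i ≫ φ.hom ≫ ξ ≫ δ.app X
            = (c.inj i ≫ φ.hom ≫ ξ) ≫ δ.app X := by simp only [Category.assoc]
          _ = ((ψ i).hom ≫ ι (A i) (m i)) ≫ δ.app X := by rw [hci i]
          _ = (ψ i).hom ≫ ι (A i) (m i) ≫ δ.app X := by simp only [Category.assoc]
          _ = (ψ i).hom ≫ ι (A i) (ι (A i) (m i)) := by rw [L3]
      have e2 : c.inj i ≫ φ.hom ≫ ξ ≫ D.map ξ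
          = (ψ i).hom ≫ ι (A i) (ι (A i) (m i)) := by
        calc c.inj i ≫ φ.hom ≫ ξ ≫ D.map ξ
            = (c.inj i ≫ φ.hom ≫ ξ) ≫ D.map ξ := by simp only [Category.assoc]
          _ = ((ψ i).hom ≫ ι (A i) (m i)) ≫ D.map ξ := by rw [hci i]
          _ = (ψ i).hom ≫ ι (A i) (m i) ≫ D.map ξ := by simp only [Category.assoc]
          _ = (ψ i).hom ≫ ι (A i) (m i ≫ ξ) := by rw [L1]
          _ = (ψ i).hom ≫ ι (A i) (ι (A i) (m i)) := by rw [hmξ i]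
      rw [e1, e2]
end

section
/- If all values of a functor M : A ⥤ B from a discrete category A lie in the image of the Eilenberg–Moore forgetful functor of a comonad C on B (i.e., each M(A) carries a C-coalgebra structure φ_A : M(A) ⟶ C(M(A))), and the density comonad D of M exists, then the unique natural transformation φ* : D ⟹ C with φ* M ∘ η = φ is a morphism of comonads. -/
open CategoryTheory Limits

universe w v

/-- if each value `M(A)` of a functor `M : A ⥤ B` from a discrete
category carries a `C`-coalgebra structure `φ_A : M(A) ⟶ C(M(A))`, and the density
comonad `Dm` of `M` exists (with universal transformation `η` and comonad structure
determined by `ε Dm M ∘ η = id` and `δ Dm M ∘ η = Dm(η) ∘ η`), then the unique natural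
transformation `lam : Dm ⟹ C` with `lam M ∘ η = φ` is a morphism of comonads. -/
theorem stmt_11 {J : Type w} {B : Type v} [Category.{w} B]
    (M : Discrete J ⥤ B) (Dm C : Comonad B)
    (η : M ⟶ M ⋙ Dm.toFunctor)
    (huniv : ∀ (K : B ⥤ B) (ψ : M ⟶ M ⋙ K),
      ∃! s : Dm.toFunctor ⟶ K, ∀ A : Discrete J, ψ.app A = η.app A ≫ s.app (M.obj A))
    (hDε : ∀ A : Discrete J, η.app A ≫ Dm.ε.app (M.obj A) = 𝟙 (M.obj A))
    (hDδ : ∀ A : Discrete J,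
      η.app A ≫ Dm.δ.app (M.obj A) = η.app A ≫ Dm.toFunctor.map (η.app A))
    (φ : ∀ A : Discrete J, M.obj A ⟶ C.toFunctor.obj (M.obj A))
    (hφε : ∀ A : Discrete J, φ A ≫ C.ε.app (M.obj A) = 𝟙 (M.obj A))
    (hφδ : ∀ A : Discrete J,
      φ A ≫ C.δ.app (M.obj A) = φ A ≫ C.toFunctor.map (φ A))
    (lam : Dm.toFunctor ⟶ C.toFunctor)
    (hlam : ∀ A : Discrete J, η.app A ≫ lam.app (M.obj A) = φ A) :
    (∀ X : B, lam.app X ≫ C.ε.app X = Dm.ε.app X) ∧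
    (∀ X : B, lam.app X ≫ C.δ.app X
        = Dm.δ.app X ≫ Dm.toFunctor.map (lam.app X) ≫ lam.app (C.toFunctor.obj X)) := by

  constructor
  · -- counit compatibility
    have key : lam ≫ C.ε = Dm.ε := by
      obtain ⟨s, -, huniq⟩ := huniv (𝟭 B) (η ≫ Functor.whiskerLeft M (lam ≫ C.ε))
      have h1 : lam ≫ C.ε = s := huniq _ (fun A => by simp)
      have h2 : Dm.ε = s := huniq _ (fun A => by
        simp only [NatTrans.comp_app, Functor.whiskerLeft_app]
        rw [← Category.assoc, hlam A, hφε A, hDε A])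
      rw [h1, h2]
    intro X
    exact congrArg (fun t => NatTrans.app t X) key
  · -- comultiplication compatibility
    have key : lam ≫ C.δ
        = Dm.δ ≫ Functor.whiskerRight lam Dm.toFunctor ≫ Functor.whiskerLeft C.toFunctor lam := by
      set s2 : Dm.toFunctor ⟶ C.toFunctor ⋙ C.toFunctor :=
        Dm.δ ≫ Functor.whiskerRight lam Dm.toFunctor ≫ Functor.whiskerLeft C.toFunctor lam with hs2
      obtain ⟨s, -, huniq⟩ := huniv (C.toFunctor ⋙ C.toFunctor) (η ≫ Functor.whiskerLeft M s2)
      have h2 : s2 = s := huniq _ (fun A => by simp)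
      have h1 : lam ≫ C.δ = s := huniq _ (fun A => by
        simp only [NatTrans.comp_app, Functor.whiskerLeft_app, hs2, Functor.whiskerRight_app]
        rw [← Category.assoc (η.app A) (Dm.δ.app (M.obj A)), hDδ A, Category.assoc,
          ← Functor.map_comp_assoc, hlam A, lam.naturality (φ A),
          ← Category.assoc (η.app A) (lam.app (M.obj A)), hlam A,
          ← Category.assoc (η.app A) (lam.app (M.obj A)), hlam A, hφδ A])
      rw [h1, h2]
    intro X
    have := congrArg (fun t => NatTrans.app t X) key
    simpa using this
end

section
/- Let M : A ⥤ B be a functor from a discrete category such that every object M(A) is finitely presentable in B, and suppose the pointwise density comonad D of M exists. Then the functor D preserves filtered colimits. -/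
open CategoryTheory Limits

universe w v

variable {B : Type v} [Category.{w} B]

/-- An object is finitely presentable if its covariant hom-functor preserves filtered
colimits. -/
def FinitelyPresentable (X : B) : Prop :=
  PreservesFilteredColimits.{w} (coyoneda.obj (Opposite.op X))

/-- if `M : A ⥤ B` from a discrete category has all its values finitely
presentable and its pointwise density comonad `D` exists (given at `X` by
`∐_{A, f : M(A) ⟶ X} M(A)`), then `D` preserves filtered colimits. -/
theorem stmt_12 {J : Type w}
    (M : Discrete J ⥤ B) (D : B ⥤ B)
    (ι : ∀ (A : Discrete J) {X : B}, (M.obj A ⟶ X) → (M.obj A ⟶ D.obj X))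
    (hc : ∀ X : B, IsColimit (Cofan.mk (D.obj X)
      (fun p : Σ A : Discrete J, (M.obj A ⟶ X) => ι p.1 p.2)))
    (hmap : ∀ {X Y : B} (h : X ⟶ Y),
      D.map h = (hc X).desc (Cofan.mk (D.obj Y)
        (fun p : Σ A : Discrete J, (M.obj A ⟶ X) => ι p.1 (p.2 ≫ h))))
    (hfp : ∀ A : Discrete J, FinitelyPresentable (M.obj A)) :
    PreservesFilteredColimits.{w} D := by
  -- key naturality: composing an injection with `D.map h` reindexes the injection
  have key : ∀ {X Y : B} (A : Discrete J) (g : M.obj A ⟶ X) (h : X ⟶ Y),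
      ι A g ≫ D.map h = ι A (g ≫ h) := by
    intro X Y A g h
    rw [hmap h]
    exact (hc X).fac _ ⟨⟨A, g⟩⟩
  -- extensionality from the coproduct structure
  have hext : ∀ {X Z : B} (f g : D.obj X ⟶ Z),
      (∀ (A : Discrete J) (u : M.obj A ⟶ X), ι A u ≫ f = ι A u ≫ g) → f = g := by
    intro X Z f g h
    apply (hc X).hom_ext
    rintro ⟨⟨A, u⟩⟩
    simpa using h A u
  constructor
  intro K _ _
  constructor
  intro F
  constructor
  intro cc hcc
  have hco : ∀ A : Discrete J,
      IsColimit ((coyoneda.obj (Opposite.op (M.obj A))).mapCocone cc) := by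
    intro A
    have : PreservesFilteredColimits.{w} (coyoneda.obj (Opposite.op (M.obj A))) := hfp A
    exact isColimitOfPreserves _ hcc
  -- every map out of M A factors through some stage
  have hsurj : ∀ (A : Discrete J) (f : M.obj A ⟶ cc.pt),
      ∃ (k : K) (g : M.obj A ⟶ F.obj k), g ≫ cc.ι.app k = f := by
    intro A f
    obtain ⟨k, g, hg⟩ := Types.jointly_surjective_of_isColimit (hco A) f
    exact ⟨k, g, hg⟩
  -- two factorizations are equalized at a later stage
  have heq : ∀ (A : Discrete J) {i j : K} (gi : M.obj A ⟶ F.obj i) (gj : M.obj A ⟶ F.obj j),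
      gi ≫ cc.ι.app i = gj ≫ cc.ι.app j →
      ∃ (k : K) (u : i ⟶ k) (v : j ⟶ k), gi ≫ F.map u = gj ≫ F.map v := by
    intro A i j gi gj h
    exact (Types.FilteredColimit.isColimit_eq_iff _ (hco A)
      (xi := gi) (xj := gj)).mp h
  -- well-definedness of the candidate descent map
  have wd : ∀ (s : Cocone (F ⋙ D)) (A : Discrete J) {i j : K}
      (gi : M.obj A ⟶ F.obj i) (gj : M.obj A ⟶ F.obj j),
      gi ≫ cc.ι.app i = gj ≫ cc.ι.app j →
      ι A gi ≫ s.ι.app i = ι A gj ≫ s.ι.app j := by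
    intro s A i j gi gj h
    obtain ⟨k, u, v, huv⟩ := heq A gi gj h
    have hi : ι A gi ≫ s.ι.app i = ι A (gi ≫ F.map u) ≫ s.ι.app k := by
      rw [← key A gi (F.map u), Category.assoc]
      congr 1
      simpa using (s.w u).symm
    have hj : ι A gj ≫ s.ι.app j = ι A (gj ≫ F.map v) ≫ s.ι.app k := by
      rw [← key A gj (F.map v), Category.assoc]
      congr 1
      simpa using (s.w v).symm
    rw [hi, hj, huv]
  constructor
  let dsc : ∀ s : Cocone (F ⋙ D), D.obj cc.pt ⟶ s.pt := fun s =>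
    (hc cc.pt).desc (Cofan.mk s.pt fun p =>
      ι p.1 (hsurj p.1 p.2).choose_spec.choose ≫ s.ι.app (hsurj p.1 p.2).choose)
  refine { desc := dsc, fac := ?_, uniq := ?_ }
  · intro s k
    apply hext
    intro A u
    have h1 : ι A u ≫ (D.mapCocone cc).ι.app k = ι A (u ≫ cc.ι.app k) := key A u (cc.ι.app k)
    rw [← Category.assoc, h1]
    have h2' : ι A (u ≫ cc.ι.app k) ≫ (hc cc.pt).desc (Cofan.mk s.pt fun p =>
        ι p.1 (hsurj p.1 p.2).choose_spec.choose ≫ s.ι.app (hsurj p.1 p.2).choose) =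
        ι A (hsurj A (u ≫ cc.ι.app k)).choose_spec.choose ≫
          s.ι.app (hsurj A (u ≫ cc.ι.app k)).choose :=
      (hc cc.pt).fac (Cofan.mk s.pt fun p =>
        ι p.1 (hsurj p.1 p.2).choose_spec.choose ≫ s.ι.app (hsurj p.1 p.2).choose)
        ⟨⟨A, u ≫ cc.ι.app k⟩⟩
    show ι A (u ≫ cc.ι.app k) ≫ (hc cc.pt).desc (Cofan.mk s.pt fun p =>
        ι p.1 (hsurj p.1 p.2).choose_spec.choose ≫ s.ι.app (hsurj p.1 p.2).choose) =
        ι A u ≫ s.ι.app k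
    rw [h2']
    exact wd s A _ u (hsurj A (u ≫ cc.ι.app k)).choose_spec.choose_spec
  · intro s m hm
    apply hext
    intro A f
    have hf := (hsurj A f).choose_spec.choose_spec
    have h2' : ι A f ≫ (hc cc.pt).desc (Cofan.mk s.pt fun p =>
        ι p.1 (hsurj p.1 p.2).choose_spec.choose ≫ s.ι.app (hsurj p.1 p.2).choose) =
        ι A (hsurj A f).choose_spec.choose ≫ s.ι.app (hsurj A f).choose :=
      (hc cc.pt).fac (Cofan.mk s.pt fun p =>
        ι p.1 (hsurj p.1 p.2).choose_spec.choose ≫ s.ι.app (hsurj p.1 p.2).choose)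
        ⟨⟨A, f⟩⟩
    show ι A f ≫ m = ι A f ≫ (hc cc.pt).desc (Cofan.mk s.pt fun p =>
        ι p.1 (hsurj p.1 p.2).choose_spec.choose ≫ s.ι.app (hsurj p.1 p.2).choose)
    rw [h2']
    calc ι A f ≫ m
        = ι A ((hsurj A f).choose_spec.choose ≫ cc.ι.app (hsurj A f).choose) ≫ m := by rw [hf]
      _ = ι A (hsurj A f).choose_spec.choose ≫ D.map (cc.ι.app (hsurj A f).choose) ≫ m := by
          rw [← Category.assoc, key]
      _ = ι A (hsurj A f).choose_spec.choose ≫ s.ι.app (hsurj A f).choose := by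
          rw [show D.map (cc.ι.app (hsurj A f).choose) ≫ m = s.ι.app (hsurj A f).choose from
            hm (hsurj A f).choose]
end

section
/- Let M : A ⥤ B be a functor from a discrete category with all M(A) connected, and let D be its pointwise density comonad. If C is a component of X and ξ : X ⟶ D(X) is a D-coalgebra, then C admits a D-coalgebra structure γ : C ⟶ D(C) such that the component inclusion ι_C : C ⟶ X is a coalgebra homomorphism (C, γ) ⟶ (X, ξ). -/
open CategoryTheory Limits

universe w v

variable {B : Type v} [Category.{w} B]

abbrev pairFun (C Y : B) : ULift.{w} Bool → B := fun b => cond b.down C Y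

def pairCofan {C Y X : B} (ιC : C ⟶ X) (ιY : Y ⟶ X) : Cofan (pairFun C Y) :=
  Cofan.mk X (fun b => Bool.rec (motive := fun t => cond t C Y ⟶ X) ιY ιC b.down)

def pairIsColimit {C Y X : B} {ιC : C ⟶ X} {ιY : Y ⟶ X}
    (h : IsColimit (BinaryCofan.mk ιC ιY)) : IsColimit (pairCofan ιC ιY) :=
  mkCofanColimit _
    (fun t => h.desc (BinaryCofan.mk (t.inj ⟨true⟩) (t.inj ⟨false⟩)))
    (fun t b => by
      obtain ⟨(_|_)⟩ := b
      · exact h.fac (BinaryCofan.mk (t.inj ⟨true⟩) (t.inj ⟨false⟩)) ⟨WalkingPair.right⟩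
      · exact h.fac (BinaryCofan.mk (t.inj ⟨true⟩) (t.inj ⟨false⟩)) ⟨WalkingPair.left⟩)
    (fun t m hm => by
      apply h.uniq (BinaryCofan.mk (t.inj ⟨true⟩) (t.inj ⟨false⟩)) m
      rintro ⟨(_|_)⟩
      · exact hm ⟨true⟩
      · exact hm ⟨false⟩)

/-- for `M : A ⥤ B` from a discrete category with all `M(A)` connected
and pointwise density comonad `D`, if `C` is a component of `X` (via the component
inclusion `ι_C`) and `ξ : X ⟶ D(X)` is a `D`-coalgebra, then `C` admits a `D`-coalgebra
structure `γ` making `ι_C` a coalgebra homomorphism `(C, γ) ⟶ (X, ξ)`. -/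
theorem stmt_14 {J : Type w} [HasCoproducts.{w} B]
    (M : Discrete J ⥤ B) (D : B ⥤ B)
    (ι : ∀ (A : Discrete J) {X : B}, (M.obj A ⟶ X) → (M.obj A ⟶ D.obj X))
    (hc : ∀ X : B, IsColimit (Cofan.mk (D.obj X)
      (fun p : Σ A : Discrete J, (M.obj A ⟶ X) => ι p.1 p.2)))
    (hmap : ∀ {X Y : B} (h : X ⟶ Y),
      D.map h = (hc X).desc (Cofan.mk (D.obj Y)
        (fun p : Σ A : Discrete J, (M.obj A ⟶ X) => ι p.1 (p.2 ≫ h))))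
    (ε : D ⟶ 𝟭 B) (δ : D ⟶ D ⋙ D)
    (hε : ∀ A : Discrete J, ι A (𝟙 (M.obj A)) ≫ ε.app (M.obj A) = 𝟙 (M.obj A))
    (hδ : ∀ A : Discrete J, ι A (𝟙 (M.obj A)) ≫ δ.app (M.obj A)
        = ι A (𝟙 (M.obj A)) ≫ D.map (ι A (𝟙 (M.obj A))))
    (hB : Componental B)
    (hconn : ∀ A : Discrete J, Connected' (M.obj A))
    (X C Y : B) (hC : Connected' C) (ιC : C ⟶ X) (ιY : Y ⟶ X)
    (hcomp : Nonempty (IsColimit (BinaryCofan.mk ιC ιY)))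
    (ξ : X ⟶ D.obj X)
    (hξ1 : ξ ≫ ε.app X = 𝟙 X)
    (hξ2 : ξ ≫ δ.app X = ξ ≫ D.map ξ) :
    ∃ γ : C ⟶ D.obj C,
      γ ≫ ε.app C = 𝟙 C ∧ γ ≫ δ.app C = γ ≫ D.map γ ∧ ιC ≫ ξ = γ ≫ D.map ιC := by
  -- basic computation rule: ι A f ≫ D.map h = ι A (f ≫ h)
  have key : ∀ {Z W : B} (h : Z ⟶ W) (A : Discrete J) (f : M.obj A ⟶ Z),
      ι A f ≫ D.map h = ι A (f ≫ h) := by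
    intro Z W h A f
    rw [hmap h]
    exact (hc Z).fac (Cofan.mk (D.obj W)
      (fun p : Σ A : Discrete J, (M.obj A ⟶ Z) => ι p.1 (p.2 ≫ h))) ⟨⟨A, f⟩⟩
  have keyid : ∀ {W : B} (A : Discrete J) (f : M.obj A ⟶ W),
      ι A (𝟙 (M.obj A)) ≫ D.map f = ι A f := by
    intro W A f; rw [key]; simp
  -- counit computation: ι A f ≫ ε = f
  have εcomp : ∀ (A : Discrete J) {Z : B} (f : M.obj A ⟶ Z), ι A f ≫ ε.app Z = f := by
    intro A Z f
    rw [← keyid A f, Category.assoc, ε.naturality, ← Category.assoc, hε]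
    simp
  -- comultiplication computation: ι A f ≫ δ = ι A (ι A f)
  have δcomp : ∀ (A : Discrete J) {Z : B} (f : M.obj A ⟶ Z),
      ι A f ≫ δ.app Z = ι A (ι A f) := by
    intro A Z f
    rw [← keyid A f, Category.assoc, δ.naturality, ← Category.assoc, hδ]
    have : (D ⋙ D).map f = D.map (D.map f) := rfl
    rw [this, Category.assoc, ← D.map_comp, keyid, keyid]
  -- factor ιC ≫ ξ through the coproduct D X
  obtain ⟨⟨⟨A, f⟩, g⟩, hfac, -⟩ := hC _ _ (hc X) (ιC ≫ ξ)
  have hfac : g ≫ ι A f = ιC ≫ ξ := hfac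
  -- g ≫ f = ιC
  have hgf : g ≫ f = ιC := by
    have := congrArg (fun t => t ≫ ε.app X) hfac
    simpa [εcomp, hξ1] using this
  -- the pair cofan and its colimit
  have hcol := hcomp.some
  have pc := pairIsColimit hcol
  have mιC : Mono ιC := hB.2 _ _ (pairCofan ιC ιY) ⟨pc⟩ ⟨true⟩
  -- f factors through ιC
  obtain ⟨⟨⟨b⟩, f'⟩, hbf, -⟩ := hconn A _ _ pc f
  cases b with
  | false =>
    exfalso
    have hbf : f' ≫ ιY = f := hbf
    obtain ⟨p, -, uq⟩ := hC _ _ pc ιC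
    have e1 : p = ⟨⟨false⟩, g ≫ f'⟩ := (uq _ (by
      show (g ≫ f') ≫ ιY = ιC
      rw [Category.assoc, hbf, hgf])).symm
    have e2 : p = ⟨⟨true⟩, 𝟙 C⟩ := (uq _ (by
      show 𝟙 C ≫ ιC = ιC
      simp)).symm
    have := congrArg Sigma.fst (e1.symm.trans e2)
    simp at this
  | true =>
    have hbf : f' ≫ ιC = f := hbf
    -- f ≫ ξ = ι A f (coassociativity, connectedness of C)
    have hfξ : ι A f = f ≫ ξ := by
      obtain ⟨p, -, uq⟩ := hC _ _ (hc (D.obj X)) (ιC ≫ ξ ≫ δ.app X)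
      have e1 : p = ⟨⟨A, ι A f⟩, g⟩ := (uq _ (by
        show g ≫ ι A (ι A f) = ιC ≫ ξ ≫ δ.app X
        rw [← δcomp, ← Category.assoc, hfac, Category.assoc])).symm
      have e2 : p = ⟨⟨A, f ≫ ξ⟩, g⟩ := (uq _ (by
        show g ≫ ι A (f ≫ ξ) = ιC ≫ ξ ≫ δ.app X
        rw [← key, ← Category.assoc, hfac, Category.assoc, ← hξ2])).symm
      have e := congrArg Sigma.fst (e1.symm.trans e2)
      simpa using e
    -- f' ≫ g = 𝟙 (M A)
    have hf'g : f' ≫ g = 𝟙 (M.obj A) := by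
      obtain ⟨p, -, uq⟩ := hconn A _ _ (hc X) (ι A f)
      have e1 : p = ⟨⟨A, f⟩, f' ≫ g⟩ := (uq _ (by
        show (f' ≫ g) ≫ ι A f = ι A f
        rw [Category.assoc, hfac, ← Category.assoc, hbf, ← hfξ])).symm
      have e2 : p = ⟨⟨A, f⟩, 𝟙 (M.obj A)⟩ := (uq _ (by
        show 𝟙 (M.obj A) ≫ ι A f = ι A f
        simp)).symm
      have e := e1.symm.trans e2
      simpa using e
    -- g ≫ f' = 𝟙 C
    have hgf' : g ≫ f' = 𝟙 C := by
      rw [← cancel_mono ιC, Category.assoc, hbf, hgf, Category.id_comp]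
    refine ⟨g ≫ ι A f', ?_, ?_, ?_⟩
    · rw [Category.assoc, εcomp, hgf']
    · rw [Category.assoc, δcomp, Category.assoc, key]
      have : f' ≫ g ≫ ι A f' = ι A f' := by rw [← Category.assoc, hf'g, Category.id_comp]
      rw [this]
    · rw [Category.assoc, key, hbf, hfac]
end
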